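/- Let H1 = (V1, 𝓔1) and H2 = (V2, 𝓔2) be finite hypergraphs, and let a message-passing UniGNN (same layer functions φ1^t, φ2^t and same constant initial feature c on both hypergraphs) compute features h^t. Let T ≥ 0 and suppose that the multisets of 1-GWL labels agree at every iteration t ∈ {0, …, T}, i.e. {{ l^t_{H1,i} : i ∈ V1 }} = {{ l^t_{H2,i} : i ∈ V2 }}, and that the multisets of UniGNN features agree at every iteration t ∈ {0, …, T−1}. Then the multisets of UniGNN features also agree at iteration T: {{ h^T_{H1,i} : i ∈ V1 }} = {{ h^T_{H2,i} : i ∈ V2 }}. -/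

import Mathlib

/-- A finite hypergraph on a vertex type `V`: a finite set of nonempty
finite hyperedges. -/
structure FinHypergraph (V : Type) [DecidableEq V] where
  edges : Finset (Finset V)
  edges_nonempty : ∀ e ∈ edges, e.Nonempty

namespace FinHypergraph

variable {V : Type} [DecidableEq V]

/-- The incident hyperedges `E_i` of a vertex `i`. -/
def incident (H : FinHypergraph V) (i : V) : Finset (Finset V) :=
  H.edges.filter (fun e => i ∈ e)

end FinHypergraph

/-- The type of 1-GWL labels at iteration `t`. -/
def LabelType : ℕ → Type
  | 0 => ℕ
  | t + 1 => Multiset (LabelType t × Multiset (LabelType t))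

/-- The 1-GWL vertex label `l^t_{H,i}`: all vertices start with label `0`, and
`l^{t+1}_i = {{ (l^t_i, l^t_e) : e ∈ E_i }}` where `l^t_e = {{ l^t_j : j ∈ e }}`. -/
def gwlLabel {V : Type} [DecidableEq V] (H : FinHypergraph V) : (t : ℕ) → V → LabelType t
  | 0, _ => (0 : ℕ)
  | t + 1, i =>
      ((H.incident i).val.map fun e => (gwlLabel H t i, e.val.map (gwlLabel H t)))

/-- The 1-GWL hyperedge label `l^t_e = {{ l^t_j : j ∈ e }}`. -/
def gwlEdgeLabel {V : Type} [DecidableEq V] (H : FinHypergraph V) (t : ℕ) (e : Finset V) :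
    Multiset (LabelType t) :=
  e.val.map (gwlLabel H t)

/-- The multiset of 1-GWL labels of all vertices, `{{ l^t_{H,i} : i ∈ V }}`. -/
def gwlMultiset {V : Type} [DecidableEq V] [Fintype V] (H : FinHypergraph V) (t : ℕ) :
    Multiset (LabelType t) :=
  (Finset.univ : Finset V).val.map (gwlLabel H t)

/-- The UniGNN feature `h^t_{H,i}` computed by two-stage message passing with
first-stage aggregations `φ1`, second-stage aggregations `φ2` and constant initial
feature `c`:  `h^{t+1}_i = φ2 t (h^t_i) {{ φ1 t {{ h^t_j : j ∈ e }} : e ∈ E_i }}`. -/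
def uniFeat {V : Type} [DecidableEq V] {X : Type}
    (φ1 : ℕ → Multiset X → X) (φ2 : ℕ → X → Multiset X → X) (c : X)
    (H : FinHypergraph V) : (t : ℕ) → V → X
  | 0, _ => c
  | t + 1, i =>
      φ2 t (uniFeat φ1 φ2 c H t i)
        ((H.incident i).val.map fun e => φ1 t (e.val.map (uniFeat φ1 φ2 c H t)))

/-- The multiset of UniGNN features of all vertices, `{{ h^t_{H,i} : i ∈ V }}`. -/
def uniFeatMultiset {V : Type} [DecidableEq V] [Fintype V] {X : Type}
    (φ1 : ℕ → Multiset X → X) (φ2 : ℕ → X → Multiset X → X) (c : X)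
    (H : FinHypergraph V) (t : ℕ) : Multiset X :=
  (Finset.univ : Finset V).val.map (uniFeat φ1 φ2 c H t)

/-- `f` is an isomorphism between hypergraphs `H1` and `H2`. -/
def IsHypergraphIso {V1 V2 : Type} [DecidableEq V1] [DecidableEq V2]
    (H1 : FinHypergraph V1) (H2 : FinHypergraph V2) (f : V1 ≃ V2) : Prop :=
  ∀ e : Finset V1, e ∈ H1.edges ↔ e.image f ∈ H2.edges

section Aux

variable {X : Type} (φ1 : ℕ → Multiset X → X) (φ2 : ℕ → X → Multiset X → X) (c : X)

/-- The feature of an isolated vertex. -/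
def isoFeat : ℕ → X
  | 0 => c
  | t + 1 => φ2 t (isoFeat t) 0

lemma uniFeat_of_isolated {V : Type} [DecidableEq V] (H : FinHypergraph V) (i : V)
    (hi : H.incident i = ∅) : ∀ t, uniFeat φ1 φ2 c H t i = isoFeat φ2 c t
  | 0 => rfl
  | t + 1 => by
      simp only [uniFeat, isoFeat, hi, Finset.empty_val, Multiset.map_zero]
      rw [uniFeat_of_isolated H i hi t]

lemma map_eq_map_of_rel {α β γ : Type*} {s : Multiset α} {t : Multiset β}
    {F : α → γ} {G : β → γ} (h : Multiset.Rel (fun a b => F a = G b) s t) :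
    s.map F = t.map G :=
  Multiset.rel_eq.mp (Multiset.rel_map.mpr h)

lemma key {V1 V2 : Type} [DecidableEq V1] [DecidableEq V2]
    (H1 : FinHypergraph V1) (H2 : FinHypergraph V2) :
    ∀ t (i : V1) (j : V2), gwlLabel H1 t i = gwlLabel H2 t j →
      uniFeat φ1 φ2 c H1 t i = uniFeat φ1 φ2 c H2 t j
  | 0, _, _, _ => rfl
  | t + 1, i, j, h => by
      simp only [gwlLabel] at h
      by_cases h1 : (H1.incident i) = ∅
      · have h2 : (H2.incident j) = ∅ := by
          rw [h1] at h
          simp only [Finset.empty_val, Multiset.map_zero] at h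
          have hc := congrArg Multiset.card h
          simp only [Multiset.card_zero, Multiset.card_map] at hc
          ext e
          simp only [Finset.notMem_empty, iff_false]
          intro he
          have : (H2.incident j).val ≠ 0 := by
            intro h0
            rw [Finset.mem_def, h0] at he
            exact (Multiset.notMem_zero e) he
          exact this (Multiset.card_eq_zero.mp hc.symm)
        rw [uniFeat_of_isolated φ1 φ2 c H1 i h1 (t + 1),
          uniFeat_of_isolated φ1 φ2 c H2 j h2 (t + 1)]
      · have hrel : Multiset.Rel
            (fun (e : Finset V1) (e' : Finset V2) =>
              ((gwlLabel H1 t i, e.val.map (gwlLabel H1 t)) :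
                  LabelType t × Multiset (LabelType t)) =
                (gwlLabel H2 t j, e'.val.map (gwlLabel H2 t)))
            (H1.incident i).val (H2.incident j).val :=
          Multiset.rel_map.mp (Multiset.rel_eq.mpr h)
        obtain ⟨e, he⟩ := Finset.nonempty_of_ne_empty h1
        have hfst : gwlLabel H1 t i = gwlLabel H2 t j := by
          have hmem : ((gwlLabel H1 t i, e.val.map (gwlLabel H1 t)) :
              LabelType t × Multiset (LabelType t)) ∈
              (H2.incident j).val.map
                (fun e' => (gwlLabel H2 t j, e'.val.map (gwlLabel H2 t))) := by
            rw [← h]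
            exact Multiset.mem_map_of_mem _ he
          obtain ⟨e', _, heq⟩ := Multiset.mem_map.mp hmem
          exact (congrArg Prod.fst heq).symm
        have hi : uniFeat φ1 φ2 c H1 t i = uniFeat φ1 φ2 c H2 t j :=
          key H1 H2 t i j hfst
        have hedges : (H1.incident i).val.map
              (fun e => φ1 t (e.val.map (uniFeat φ1 φ2 c H1 t))) =
            (H2.incident j).val.map
              (fun e' => φ1 t (e'.val.map (uniFeat φ1 φ2 c H2 t))) := by
          apply map_eq_map_of_rel
          refine hrel.mono ?_
          intro e _ e' _ hee
          have h2 : e.val.map (gwlLabel H1 t) = e'.val.map (gwlLabel H2 t) :=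
            congrArg Prod.snd hee
          congr 1
          apply map_eq_map_of_rel
          refine (Multiset.rel_map.mp (Multiset.rel_eq.mpr h2)).mono ?_
          intro a _ b _ hab
          exact key H1 H2 t a b hab
        simp only [uniFeat]
        rw [hi, hedges]

end Aux

/-- If the multisets of 1-GWL labels of `H1` and `H2` agree for all `t ∈ {0,…,T}` and
the multisets of UniGNN features agree for all `t ∈ {0,…,T-1}`, then the multisets of
UniGNN features also agree at iteration `T`. -/
theorem uniFeatMultiset_eq_of_gwlMultiset_eq
    {X : Type} (φ1 : ℕ → Multiset X → X) (φ2 : ℕ → X → Multiset X → X) (c : X)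
    {V1 V2 : Type} [DecidableEq V1] [Fintype V1] [DecidableEq V2] [Fintype V2]
    (H1 : FinHypergraph V1) (H2 : FinHypergraph V2) (T : ℕ)
    (hl : ∀ t ≤ T, gwlMultiset H1 t = gwlMultiset H2 t)
    (hh : ∀ t < T, uniFeatMultiset φ1 φ2 c H1 t = uniFeatMultiset φ1 φ2 c H2 t) :
    uniFeatMultiset φ1 φ2 c H1 T = uniFeatMultiset φ1 φ2 c H2 T := by
  have hT := hl T le_rfl
  unfold gwlMultiset at hT
  unfold uniFeatMultiset
  apply map_eq_map_of_rel
  refine (Multiset.rel_map.mp (Multiset.rel_eq.mpr hT)).mono ?_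
  intro a _ b _ hab
  exact key φ1 φ2 c H1 H2 T a b hab
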